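/- In the setup below, the expected value of max_i X_i over the randomness of the coin flips equals Σ_{j=1}^{j*−1} W_j·2^{−j} + W_{j*}·2^{−(j*−1)}. -/
import Mathlib


/-- Maximum of a function on `Fin n`, for `n > 0`. -/
noncomputable def finMax {n : ℕ} (hn : 0 < n) (f : Fin n → ℝ) : ℝ :=
  Finset.univ.sup' (Finset.univ_nonempty_iff.mpr (Fin.pos_iff_nonempty.mp hn)) f

/-- The gambler's reward when the values `X` arrive in the order given by the
permutation `π` and the gambler accepts the first arriving value strictly
exceeding the threshold `max_i X̃ i` (reward `0` if no value does). -/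
noncomputable def gamblerReward {n : ℕ} (hn : 0 < n) (π : Equiv.Perm (Fin n))
    (X Xt : Fin n → ℝ) : ℝ :=
  if h : (Finset.univ.filter (fun k => finMax hn Xt < X (π k))).Nonempty then
    X (π ((Finset.univ.filter (fun k => finMax hn Xt < X (π k))).min' h))
  else 0

lemma card_filter_fix (n : ℕ) (s : Finset (Fin n)) (v : Fin n → Bool) :
    (Finset.univ.filter (fun C : Fin n → Bool => ∀ i ∈ s, C i = v i)).card
      = 2 ^ (n - s.card) := by
  rw [← Fintype.card_subtype]
  have e : {C : Fin n → Bool // ∀ i ∈ s, C i = v i}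
      ≃ ∀ i : Fin n, {b : Bool // i ∈ s → b = v i} :=
    Equiv.subtypePiEquivPi (p := fun (i : Fin n) (b : Bool) => i ∈ s → b = v i)
  rw [Fintype.card_congr e, Fintype.card_pi]
  have h1 : ∀ i : Fin n, Fintype.card {b : Bool // i ∈ s → b = v i}
      = if i ∈ s then 1 else 2 := by
    intro i
    by_cases hi : i ∈ s
    · simp [hi, Fintype.card_subtype]
    · simp [hi, Fintype.card_subtype]
  simp_rw [h1]
  rw [Finset.prod_ite]
  simp only [one_pow, one_mul, Finset.prod_const]
  congr 1
  have : Finset.filter (fun x => x ∉ s) Finset.univ = sᶜ := by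
    ext x; simp
  rw [this, Finset.card_compl, Fintype.card_fin]

/-- **Prophet's expected reward** (Proposition 3.3 of the paper). With the `2n`
distinct values `Y i > Z i ≥ 0` relabeled in decreasing order as
`W 1 > … > W (2n)` and pivotal index `jstar`, the expectation over the `n`
independent fair coin flips `C` (where `X i = Y i` if `C i` is heads and
`X i = Z i` otherwise) of `max_i X i` equals
`∑_{j=1}^{jstar-1} W j / 2^j + W jstar / 2^(jstar-1)`. -/
theorem prophet_expected_reward
    -- the `2n` values: `Y i > Z i ≥ 0` for each pair `i`, all distinct
    (n : ℕ) (hn : 0 < n) (Y Z : Fin n → ℝ)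
    (hZnonneg : ∀ i, 0 ≤ Z i) (hYZ : ∀ i, Z i < Y i)
    (hdistinct : Function.Injective (Sum.elim Y Z))
    -- `W 1 > W 2 > … > W (2n)` is the decreasing relabeling of the `2n` values
    (W : ℕ → ℝ) (hWanti : StrictAntiOn W (Set.Icc 1 (2 * n)))
    (hWrange : (Finset.Icc 1 (2 * n)).image W
      = Finset.univ.image Y ∪ Finset.univ.image Z)
    -- `ι j` is the index of the pair containing `W j`
    (ι : ℕ → Fin n)
    (hι : ∀ j ∈ Finset.Icc 1 (2 * n), W j = Y (ι j) ∨ W j = Z (ι j))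
    -- `jstar` is the pivotal index: the least `j` whose pair index repeats an earlier one
    (jstar : ℕ)
    (hjstar : IsLeast {j : ℕ | j ∈ Finset.Icc 1 (2 * n)
      ∧ ∃ ℓ, 1 ≤ ℓ ∧ ℓ < j ∧ ι ℓ = ι j} jstar)
    :
    (∑ C : Fin n → Bool,
        finMax hn (fun i => if C i then Y i else Z i)) / 2 ^ n
      = (∑ j ∈ Finset.Icc 1 (jstar - 1), W j / 2 ^ j)
          + W jstar / 2 ^ (jstar - 1) := by
  obtain ⟨⟨hjmem, ℓs, hℓ1, hℓlt, hℓι⟩, hleast⟩ := hjstar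
  rw [Finset.mem_Icc] at hjmem
  obtain ⟨hjs1, hjs2n⟩ := hjmem
  -- injectivity facts
  have hYinj : Function.Injective Y := fun a b h => by
    have := hdistinct (a₁ := Sum.inl a) (a₂ := Sum.inl b) (by simpa using h)
    simpa using this
  have hYZne : ∀ a b, Y a ≠ Z b := fun a b h => by
    have := hdistinct (a₁ := Sum.inl a) (a₂ := Sum.inr b) (by simpa using h)
    simp at this
  -- every Y i and Z i is some W m
  have hYW : ∀ i, ∃ m, m ∈ Finset.Icc 1 (2 * n) ∧ W m = Y i := by
    intro i
    have : Y i ∈ (Finset.Icc 1 (2 * n)).image W := by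
      rw [hWrange]; exact Finset.mem_union_left _ (Finset.mem_image_of_mem Y (Finset.mem_univ i))
    obtain ⟨m, hm, hmw⟩ := Finset.mem_image.mp this
    exact ⟨m, hm, hmw⟩
  have hZW : ∀ i, ∃ m, m ∈ Finset.Icc 1 (2 * n) ∧ W m = Z i := by
    intro i
    have : Z i ∈ (Finset.Icc 1 (2 * n)).image W := by
      rw [hWrange]; exact Finset.mem_union_right _ (Finset.mem_image_of_mem Z (Finset.mem_univ i))
    obtain ⟨m, hm, hmw⟩ := Finset.mem_image.mp this
    exact ⟨m, hm, hmw⟩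
  -- before jstar, W j is the Y-value of its pair
  have hWY : ∀ j, 1 ≤ j → j < jstar → W j = Y (ι j) := by
    intro j h1 hlt
    have hj2n : j ≤ 2 * n := le_trans (Nat.le_of_lt hlt) hjs2n
    have hjset : j ∈ Set.Icc 1 (2 * n) := ⟨h1, hj2n⟩
    rcases hι j (Finset.mem_Icc.mpr ⟨h1, hj2n⟩) with h | h
    · exact h
    · exfalso
      obtain ⟨m, hm, hmw⟩ := hYW (ι j)
      rw [Finset.mem_Icc] at hm
      have hmset : m ∈ Set.Icc 1 (2 * n) := ⟨hm.1, hm.2⟩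
      have hWmj : W j < W m := by rw [h, hmw]; exact hYZ (ι j)
      have hmj : m < j := by
        rcases lt_trichotomy m j with h' | h' | h'
        · exact h'
        · exfalso; rw [h'] at hWmj; exact lt_irrefl _ hWmj
        · exact absurd (hWanti hjset hmset h') (not_lt.mpr (le_of_lt hWmj))
      rcases hι m (Finset.mem_Icc.mpr hm) with h2 | h2
      · have : ι m = ι j := hYinj (by rw [← h2, hmw])
        have : jstar ≤ j := hleast ⟨Finset.mem_Icc.mpr ⟨h1, hj2n⟩, m, hm.1, hmj, this⟩
        omega
      · exact hYZne (ι j) (ι m) (by rw [← hmw, h2])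
  have hjs2 : 2 ≤ jstar := by omega
  -- ι is injective on [1, jstar - 1]
  have hιinj : ∀ a b, 1 ≤ a → a ≤ jstar - 1 → 1 ≤ b → b ≤ jstar - 1 → ι a = ι b → a = b := by
    intro a b ha1 ha2 hb1 hb2 hab
    by_contra hne
    rcases Nat.lt_or_ge a b with h | h
    · have : jstar ≤ b := hleast ⟨Finset.mem_Icc.mpr ⟨hb1, by omega⟩, a, ha1, h, hab⟩
      omega
    · have h' : b < a := by omega
      have : jstar ≤ a := hleast ⟨Finset.mem_Icc.mpr ⟨ha1, by omega⟩, b, hb1, h', hab.symm⟩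
      omega
  -- jstar - 1 ≤ n
  have hjsn : jstar - 1 ≤ n := by
    have hinj : Set.InjOn ι ↑(Finset.Icc 1 (jstar - 1)) := by
      intro a ha b hb hab
      rw [Finset.coe_Icc, Set.mem_Icc] at ha hb
      exact hιinj a b ha.1 ha.2 hb.1 hb.2 hab
    have := Finset.card_image_of_injOn hinj
    have hle : ((Finset.Icc 1 (jstar - 1)).image ι).card ≤ n := by
      calc ((Finset.Icc 1 (jstar - 1)).image ι).card
          ≤ (Finset.univ : Finset (Fin n)).card := Finset.card_le_card (Finset.subset_univ _)
        _ = n := by simp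
    rw [this, Nat.card_Icc] at hle
    omega
  -- W jstar is the Z-value of its pair
  have hWZ : W jstar = Z (ι jstar) := by
    rcases hι jstar (Finset.mem_Icc.mpr ⟨hjs1, hjs2n⟩) with h | h
    · exfalso
      have h1 : W ℓs = Y (ι ℓs) := hWY ℓs hℓ1 hℓlt
      have : W ℓs = W jstar := by rw [h1, hℓι, ← h]
      have hlt : W jstar < W ℓs := hWanti ⟨hℓ1, by omega⟩ ⟨hjs1, hjs2n⟩ hℓlt
      rw [this] at hlt; exact lt_irrefl _ hlt
    · exact h
  -- upper bound for the max
  have hub : ∀ (C : Fin n → Bool) (j : ℕ), 1 ≤ j → j ≤ jstar →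
      (∀ m, 1 ≤ m → m < j → C (ι m) = false) →
      ∀ i, (if C i then Y i else Z i) ≤ W j := by
    intro C j h1 hj hC i
    have hjset : j ∈ Set.Icc 1 (2 * n) := ⟨h1, by omega⟩
    obtain ⟨m, hm, hmw⟩ : ∃ m, m ∈ Finset.Icc 1 (2 * n) ∧ W m = (if C i then Y i else Z i) := by
      by_cases hc : C i
      · obtain ⟨m, hm, hmw⟩ := hYW i; exact ⟨m, hm, by rw [if_pos hc]; exact hmw⟩
      · obtain ⟨m, hm, hmw⟩ := hZW i; exact ⟨m, hm, by rw [if_neg hc]; exact hmw⟩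
    rw [Finset.mem_Icc] at hm
    have hmset : m ∈ Set.Icc 1 (2 * n) := ⟨hm.1, hm.2⟩
    rcases Nat.lt_or_ge m j with hlt | hge
    · exfalso
      have hmY : W m = Y (ι m) := hWY m hm.1 (by omega)
      by_cases hc : C i
      · rw [if_pos hc] at hmw
        have : i = ι m := hYinj (by rw [← hmw, hmY])
        have : C (ι m) = true := by rw [← this]; exact hc
        rw [hC m hm.1 hlt] at this; exact Bool.false_ne_true this
      · rw [if_neg hc] at hmw
        exact hYZne (ι m) i (by rw [← hmY, hmw])
    · rw [← hmw]
      exact (hWanti.antitoneOn) hjset hmset hge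
  set f : (Fin n → Bool) → ℝ := fun C => finMax hn (fun i => if C i then Y i else Z i) with hf
  have hne : (Finset.univ : Finset (Fin n)).Nonempty :=
    Finset.univ_nonempty_iff.mpr (Fin.pos_iff_nonempty.mp hn)
  -- value of the max on each event
  have hmaxEj : ∀ (C : Fin n → Bool) (j : ℕ), 1 ≤ j → j ≤ jstar - 1 →
      (∀ m, 1 ≤ m → m < j → C (ι m) = false) → C (ι j) = true → f C = W j := by
    intro C j h1 hj hC hCj
    have hfC : f C = Finset.univ.sup' hne (fun i => if C i then Y i else Z i) := rfl
    rw [hfC]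
    apply le_antisymm
    · exact Finset.sup'_le _ _ (fun i _ => hub C j h1 (by omega) hC i)
    · have : (if C (ι j) then Y (ι j) else Z (ι j)) = W j := by
        rw [if_pos hCj, hWY j h1 (by omega)]
      rw [← this]
      exact Finset.le_sup' (fun i => if C i then Y i else Z i) (Finset.mem_univ (ι j))
  have hmaxEs : ∀ (C : Fin n → Bool),
      (∀ m, 1 ≤ m → m < jstar → C (ι m) = false) → f C = W jstar := by
    intro C hC
    have hfC : f C = Finset.univ.sup' hne (fun i => if C i then Y i else Z i) := rfl
    rw [hfC]
    apply le_antisymm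
    · exact Finset.sup'_le _ _ (fun i _ => hub C jstar hjs1 le_rfl hC i)
    · have hCℓ : C (ι jstar) = false := by rw [← hℓι]; exact hC ℓs hℓ1 hℓlt
      have : (if C (ι jstar) then Y (ι jstar) else Z (ι jstar)) = W jstar := by
        rw [hCℓ, if_neg (by simp), hWZ]
      rw [← this]
      exact Finset.le_sup' (fun i => if C i then Y i else Z i) (Finset.mem_univ (ι jstar))
  -- the classifying function
  set g : (Fin n → Bool) → ℕ := fun C =>
    if h : ((Finset.Icc 1 (jstar - 1)).filter (fun m => C (ι m) = true)).Nonempty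
    then ((Finset.Icc 1 (jstar - 1)).filter (fun m => C (ι m) = true)).min' h
    else jstar with hg
  have hg_mem : ∀ C, g C ∈ Finset.Icc 1 jstar := by
    intro C
    simp only [hg]
    by_cases h : ((Finset.Icc 1 (jstar - 1)).filter (fun m => C (ι m) = true)).Nonempty
    · simp only [dif_pos h]
      have := Finset.min'_mem _ h
      rw [Finset.mem_filter, Finset.mem_Icc] at this
      rw [Finset.mem_Icc]; omega
    · simp only [dif_neg h]
      rw [Finset.mem_Icc]; omega
  have hg_eq_j : ∀ (C : Fin n → Bool) (j : ℕ), 1 ≤ j → j ≤ jstar - 1 →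
      (g C = j ↔ (C (ι j) = true ∧ ∀ m, 1 ≤ m → m < j → C (ι m) = false)) := by
    intro C j h1 hj
    constructor
    · intro hgj
      simp only [hg] at hgj
      by_cases h : ((Finset.Icc 1 (jstar - 1)).filter (fun m => C (ι m) = true)).Nonempty
      · rw [dif_pos h] at hgj
        have hmem := Finset.min'_mem _ h
        rw [hgj, Finset.mem_filter] at hmem
        refine ⟨hmem.2, fun m hm1 hmj => ?_⟩
        by_contra hcm
        have hcm' : C (ι m) = true := by
          simpa using hcm
        have : j ≤ m := by
          rw [← hgj]
          exact Finset.min'_le _ m (Finset.mem_filter.mpr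
            ⟨Finset.mem_Icc.mpr ⟨hm1, by omega⟩, hcm'⟩)
        omega
      · rw [dif_neg h] at hgj; omega
    · rintro ⟨hCj, hC⟩
      have hjmem : j ∈ (Finset.Icc 1 (jstar - 1)).filter (fun m => C (ι m) = true) :=
        Finset.mem_filter.mpr ⟨Finset.mem_Icc.mpr ⟨h1, hj⟩, hCj⟩
      have h : ((Finset.Icc 1 (jstar - 1)).filter (fun m => C (ι m) = true)).Nonempty :=
        ⟨j, hjmem⟩
      simp only [hg]
      rw [dif_pos h]
      apply le_antisymm (Finset.min'_le _ j hjmem)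
      by_contra hlt
      push_neg at hlt
      have hmem := Finset.min'_mem _ h
      rw [Finset.mem_filter, Finset.mem_Icc] at hmem
      have := hC _ hmem.1.1 hlt
      rw [this] at hmem
      exact Bool.false_ne_true hmem.2
  have hg_eq_star : ∀ (C : Fin n → Bool),
      (g C = jstar ↔ ∀ m, 1 ≤ m → m < jstar → C (ι m) = false) := by
    intro C
    constructor
    · intro hgj m hm1 hm
      simp only [hg] at hgj
      by_cases h : ((Finset.Icc 1 (jstar - 1)).filter (fun m => C (ι m) = true)).Nonempty
      · rw [dif_pos h] at hgj
        have hmem := Finset.min'_mem _ h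
        rw [hgj, Finset.mem_filter, Finset.mem_Icc] at hmem
        omega
      · rw [Finset.not_nonempty_iff_eq_empty, Finset.filter_eq_empty_iff] at h
        have := h (Finset.mem_Icc.mpr ⟨hm1, by omega⟩)
        simpa using this
    · intro hC
      have h : ¬ ((Finset.Icc 1 (jstar - 1)).filter (fun m => C (ι m) = true)).Nonempty := by
        rw [Finset.not_nonempty_iff_eq_empty, Finset.filter_eq_empty_iff]
        intro m hm
        rw [Finset.mem_Icc] at hm
        rw [hC m hm.1 (by omega)]
        simp
      simp only [hg]
      rw [dif_neg h]
  -- cardinalities of the fibers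
  have hcard_j : ∀ j, 1 ≤ j → j ≤ jstar - 1 →
      (Finset.univ.filter (fun C : Fin n → Bool => g C = j)).card = 2 ^ (n - j) := by
    intro j h1 hj
    have hpred : ∀ C : Fin n → Bool, g C = j ↔
        (∀ i ∈ (Finset.Icc 1 j).image ι, C i = (if i = ι j then true else false)) := by
      intro C
      rw [hg_eq_j C j h1 hj]
      constructor
      · rintro ⟨hCj, hC⟩ i hi
        obtain ⟨m, hm, rfl⟩ := Finset.mem_image.mp hi
        rw [Finset.mem_Icc] at hm
        rcases Nat.lt_or_ge m j with hlt | hge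
        · have hne2 : ι m ≠ ι j := fun hcon => by
            have := hιinj m j hm.1 (by omega) h1 hj hcon; omega
          rw [if_neg hne2]
          exact hC m hm.1 hlt
        · have : m = j := by omega
          subst this
          rw [if_pos rfl]; exact hCj
      · intro hC
        have hj' : C (ι j) = true := by
          have := hC (ι j) (Finset.mem_image_of_mem ι (Finset.mem_Icc.mpr ⟨h1, le_rfl⟩))
          rw [if_pos rfl] at this; exact this
        refine ⟨hj', fun m hm1 hmj => ?_⟩
        have := hC (ι m) (Finset.mem_image_of_mem ι (Finset.mem_Icc.mpr ⟨hm1, by omega⟩))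
        have hne2 : ι m ≠ ι j := fun hcon => by
          have := hιinj m j hm1 (by omega) h1 hj hcon; omega
        rw [if_neg hne2] at this; exact this
    have : Finset.univ.filter (fun C : Fin n → Bool => g C = j)
        = Finset.univ.filter (fun C : Fin n → Bool =>
            ∀ i ∈ (Finset.Icc 1 j).image ι, C i = (if i = ι j then true else false)) := by
      apply Finset.filter_congr
      intro C _
      exact hpred C
    rw [this, card_filter_fix]
    congr 1
    have hinj : Set.InjOn ι ↑(Finset.Icc 1 j) := by
      intro a ha b hb hab
      rw [Finset.coe_Icc, Set.mem_Icc] at ha hb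
      exact hιinj a b ha.1 (by omega) hb.1 (by omega) hab
    rw [Finset.card_image_of_injOn hinj, Nat.card_Icc]
    omega
  have hcard_star :
      (Finset.univ.filter (fun C : Fin n → Bool => g C = jstar)).card = 2 ^ (n - (jstar - 1)) := by
    have hpred : ∀ C : Fin n → Bool, g C = jstar ↔
        (∀ i ∈ (Finset.Icc 1 (jstar - 1)).image ι, C i = false) := by
      intro C
      rw [hg_eq_star C]
      constructor
      · intro hC i hi
        obtain ⟨m, hm, rfl⟩ := Finset.mem_image.mp hi
        rw [Finset.mem_Icc] at hm
        exact hC m hm.1 (by omega)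
      · intro hC m hm1 hm
        exact hC (ι m) (Finset.mem_image_of_mem ι (Finset.mem_Icc.mpr ⟨hm1, by omega⟩))
    have : Finset.univ.filter (fun C : Fin n → Bool => g C = jstar)
        = Finset.univ.filter (fun C : Fin n → Bool =>
            ∀ i ∈ (Finset.Icc 1 (jstar - 1)).image ι, C i = (fun _ => false) i) := by
      apply Finset.filter_congr
      intro C _
      exact hpred C
    rw [this, card_filter_fix]
    congr 1
    have hinj : Set.InjOn ι ↑(Finset.Icc 1 (jstar - 1)) := by
      intro a ha b hb hab
      rw [Finset.coe_Icc, Set.mem_Icc] at ha hb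
      exact hιinj a b ha.1 ha.2 hb.1 hb.2 hab
    rw [Finset.card_image_of_injOn hinj, Nat.card_Icc]
    omega
  -- fiberwise decomposition of the sum
  have hsum : ∑ C : Fin n → Bool, f C
      = ∑ j ∈ Finset.Icc 1 jstar,
          ∑ C ∈ Finset.univ.filter (fun C : Fin n → Bool => g C = j), f C := by
    exact (Finset.sum_fiberwise_of_maps_to (fun C _ => hg_mem C) f).symm
  have hsplit : ∑ j ∈ Finset.Icc 1 jstar,
        ∑ C ∈ Finset.univ.filter (fun C : Fin n → Bool => g C = j), f C
      = (∑ j ∈ Finset.Icc 1 (jstar - 1),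
          ∑ C ∈ Finset.univ.filter (fun C : Fin n → Bool => g C = j), f C)
        + ∑ C ∈ Finset.univ.filter (fun C : Fin n → Bool => g C = jstar), f C := by
    have : jstar = (jstar - 1) + 1 := by omega
    rw [this]
    rw [Finset.sum_Icc_succ_top (by omega)]
    simp only [Nat.add_sub_cancel]
  -- evaluate each fiber sum
  have hfib_j : ∀ j, 1 ≤ j → j ≤ jstar - 1 →
      ∑ C ∈ Finset.univ.filter (fun C : Fin n → Bool => g C = j), f C
        = (2 ^ (n - j) : ℝ) * W j := by
    intro j h1 hj
    have : ∀ C ∈ Finset.univ.filter (fun C : Fin n → Bool => g C = j), f C = W j := by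
      intro C hC
      rw [Finset.mem_filter] at hC
      obtain ⟨hCj, hCm⟩ := (hg_eq_j C j h1 hj).mp hC.2
      exact hmaxEj C j h1 hj hCm hCj
    rw [Finset.sum_congr rfl this, Finset.sum_const, hcard_j j h1 hj, nsmul_eq_mul]
    push_cast
    ring
  have hfib_star :
      ∑ C ∈ Finset.univ.filter (fun C : Fin n → Bool => g C = jstar), f C
        = (2 ^ (n - (jstar - 1)) : ℝ) * W jstar := by
    have : ∀ C ∈ Finset.univ.filter (fun C : Fin n → Bool => g C = jstar), f C = W jstar := by
      intro C hC
      rw [Finset.mem_filter] at hC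
      exact hmaxEs C ((hg_eq_star C).mp hC.2)
    rw [Finset.sum_congr rfl this, Finset.sum_const, hcard_star, nsmul_eq_mul]
    push_cast
    ring
  have hsum2 : ∑ j ∈ Finset.Icc 1 (jstar - 1),
        ∑ C ∈ Finset.univ.filter (fun C : Fin n → Bool => g C = j), f C
      = ∑ j ∈ Finset.Icc 1 (jstar - 1), (2 ^ (n - j) : ℝ) * W j := by
    apply Finset.sum_congr rfl
    intro j hj
    rw [Finset.mem_Icc] at hj
    exact hfib_j j hj.1 hj.2
  rw [hsum, hsplit, hfib_star, hsum2]
  rw [add_div, Finset.sum_div]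
  congr 1
  · apply Finset.sum_congr rfl
    intro j hj
    rw [Finset.mem_Icc] at hj
    have hjn : j ≤ n := by omega
    have h2 : (2:ℝ) ^ (n - j) * 2 ^ j = 2 ^ n := by
      rw [← pow_add, Nat.sub_add_cancel hjn]
    rw [div_eq_div_iff (by positivity) (by positivity)]
    linear_combination (W j) * h2
  · have h2 : (2:ℝ) ^ (n - (jstar - 1)) * 2 ^ (jstar - 1) = 2 ^ n := by
      rw [← pow_add, Nat.sub_add_cancel hjsn]
    rw [div_eq_div_iff (by positivity) (by positivity)]
    linear_combination (W jstar) * h2
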